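/- Let R be a unital ring, n ≥ 2, M a 2-torsion free unital Mₙ(R)-bimodule, and Δ : Mₙ(R) → M an additive map satisfying: AB = BA = 0 implies Δ(A)B + AΔ(B) + Δ(B)A + BΔ(A) = 0, with EΔ(E)F = FΔ(E)E = 0 where E = E₁₁ and F = 1 - E₁₁. Then for every A ∈ Mₙ(R), Δ(FAE) = FΔ(FAE)E. -/

import Mathlib

/-- A (not necessarily unital) bimodule structure of a ring `A` on an
additive group `M`, given by a left action `l` and a right action `r`. -/
structure RingBimod (A M : Type*) [Ring A] [AddCommGroup M] where
  l : A → M → M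
  r : M → A → M
  l_add : ∀ a m₁ m₂, l a (m₁ + m₂) = l a m₁ + l a m₂
  add_l : ∀ a₁ a₂ m, l (a₁ + a₂) m = l a₁ m + l a₂ m
  r_add : ∀ m₁ m₂ a, r (m₁ + m₂) a = r m₁ a + r m₂ a
  add_r : ∀ m a₁ a₂, r m (a₁ + a₂) = r m a₁ + r m a₂
  mul_l : ∀ a₁ a₂ m, l (a₁ * a₂) m = l a₁ (l a₂ m)
  r_mul : ∀ m a₁ a₂, r m (a₁ * a₂) = r (r m a₁) a₂
  l_r : ∀ a₁ m a₂, l a₁ (r m a₂) = r (l a₁ m) a₂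

namespace RingBimod
variable {A M : Type*} [Ring A] [AddCommGroup M] (bm : RingBimod A M)
theorem l_zero (a : A) : bm.l a (0 : M) = 0 := by
  have h := bm.l_add a 0 0
  rw [add_zero] at h
  exact add_left_cancel (h.symm.trans (add_zero _).symm)
theorem zero_l (m : M) : bm.l (0 : A) m = 0 := by
  have h := bm.add_l 0 0 m
  rw [add_zero] at h
  exact add_left_cancel (h.symm.trans (add_zero _).symm)
theorem r_zero (m : M) : bm.r m (0 : A) = 0 := by
  have h := bm.add_r m 0 0
  rw [add_zero] at h
  exact add_left_cancel (h.symm.trans (add_zero _).symm)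
theorem zero_r (a : A) : bm.r (0 : M) a = 0 := by
  have h := bm.r_add 0 0 a
  rw [add_zero] at h
  exact add_left_cancel (h.symm.trans (add_zero _).symm)
theorem l_neg (a : A) (m : M) : bm.l a (-m) = -bm.l a m := by
  have h := bm.l_add a m (-m)
  rw [add_neg_cancel, bm.l_zero] at h
  exact eq_neg_of_add_eq_zero_right h.symm
theorem neg_l (a : A) (m : M) : bm.l (-a) m = -bm.l a m := by
  have h := bm.add_l a (-a) m
  rw [add_neg_cancel, bm.zero_l] at h
  exact eq_neg_of_add_eq_zero_right h.symm
theorem r_neg (m : M) (a : A) : bm.r (-m) a = -bm.r m a := by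
  have h := bm.r_add m (-m) a
  rw [add_neg_cancel, bm.zero_r] at h
  exact eq_neg_of_add_eq_zero_right h.symm
theorem neg_r (m : M) (a : A) : bm.r m (-a) = -bm.r m a := by
  have h := bm.add_r m a (-a)
  rw [add_neg_cancel, bm.r_zero] at h
  exact eq_neg_of_add_eq_zero_right h.symm
theorem l_sub (a : A) (m₁ m₂ : M) : bm.l a (m₁ - m₂) = bm.l a m₁ - bm.l a m₂ := by
  rw [sub_eq_add_neg, bm.l_add, bm.l_neg, ← sub_eq_add_neg]
theorem sub_l (a₁ a₂ : A) (m : M) : bm.l (a₁ - a₂) m = bm.l a₁ m - bm.l a₂ m := by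
  rw [sub_eq_add_neg, bm.add_l, bm.neg_l, ← sub_eq_add_neg]
theorem r_sub (m₁ m₂ : M) (a : A) : bm.r (m₁ - m₂) a = bm.r m₁ a - bm.r m₂ a := by
  rw [sub_eq_add_neg, bm.r_add, bm.r_neg, ← sub_eq_add_neg]
theorem sub_r (m : M) (a₁ a₂ : A) : bm.r m (a₁ - a₂) = bm.r m a₁ - bm.r m a₂ := by
  rw [sub_eq_add_neg, bm.add_r, bm.neg_r, ← sub_eq_add_neg]
end RingBimod

open Matrix in
theorem key_lemma (R : Type*) [Ring R] (n : ℕ)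
    (M : Type*) [AddCommGroup M] (bm : RingBimod (Matrix (Fin n) (Fin n) R) M)
    (hunit : ∀ m : M, bm.l 1 m = m ∧ bm.r m 1 = m)
    (htf : ∀ m : M, m + m = 0 → m = 0)
    (Δ : Matrix (Fin n) (Fin n) R → M)
    (hadd : ∀ A B, Δ (A + B) = Δ A + Δ B)
    (hΔ : ∀ A B, A * B = 0 → B * A = 0 →
      bm.r (Δ A) B + bm.l A (Δ B) + bm.r (Δ B) A + bm.l B (Δ A) = 0)
    (E F : Matrix (Fin n) (Fin n) R) (z : Fin n)
    (hE : E = Matrix.single z z (1 : R))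
    (hF : F = 1 - E)
    (hEF1 : bm.l E (bm.r (Δ E) F) = 0) (hEF2 : bm.l F (bm.r (Δ E) E) = 0)
    (i : Fin n) (hi : i ≠ z) (c : R) :
    Δ (Matrix.single i z c) =
      bm.l F (bm.r (Δ (Matrix.single i z c)) E) := by
  have hiz : z ≠ i := hi.symm
  -- names
  obtain ⟨X, hXdef⟩ : ∃ X, X = Matrix.single i z c := ⟨_, rfl⟩
  obtain ⟨W, hWdef⟩ : ∃ W, W = Matrix.single z z c := ⟨_, rfl⟩
  obtain ⟨X₀, hX0def⟩ : ∃ X₀, X₀ = Matrix.single i z (1:R) := ⟨_, rfl⟩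
  obtain ⟨Y, hYdef⟩ : ∃ Y, Y = Matrix.single z i (1:R) := ⟨_, rfl⟩
  obtain ⟨f₁, hf1def⟩ : ∃ f₁, f₁ = Matrix.single i i (1:R) := ⟨_, rfl⟩
  obtain ⟨g, hgdef⟩ : ∃ g, g = F - f₁ := ⟨_, rfl⟩
  rw [← hXdef]
  -- Δ is additive
  have dzero : Δ 0 = 0 := by
    have h := hadd 0 0
    rw [add_zero] at h
    exact add_left_cancel (h.symm.trans (add_zero _).symm)
  have dneg : ∀ B, Δ (-B) = -Δ B := by
    intro B
    have h := hadd B (-B)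
    rw [add_neg_cancel, dzero] at h
    exact eq_neg_of_add_eq_zero_right h.symm
  have dsub : ∀ B C, Δ (B - C) = Δ B - Δ C := by
    intro B C; rw [sub_eq_add_neg, hadd, dneg, ← sub_eq_add_neg]
  -- matrix facts
  have hEE : E * E = E := by rw [hE, Matrix.single_mul_single_same, one_mul]
  have hEFm : E * F = 0 := by rw [hF, mul_sub, mul_one, hEE, sub_self]
  have hFEm : F * E = 0 := by rw [hF, sub_mul, one_mul, hEE, sub_self]
  have hFF : F * F = F := by
    rw [hF, sub_mul, one_mul, mul_sub, mul_one, hEE, sub_self, sub_zero]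
  have hXE : X * E = X := by rw [hXdef, hE, Matrix.single_mul_single_same, mul_one]
  have hEX : E * X = 0 := by rw [hXdef, hE, Matrix.single_mul_single_of_ne (h := hiz)]
  have hXF : X * F = 0 := by rw [hF, mul_sub, mul_one, hXE, sub_self]
  have hFX : F * X = X := by rw [hF, sub_mul, one_mul, hEX, sub_zero]
  have hXX : X * X = 0 := by rw [hXdef, Matrix.single_mul_single_of_ne (h := hiz)]
  have hWE : W * E = W := by rw [hWdef, hE, Matrix.single_mul_single_same, mul_one]
  have hEW : E * W = W := by rw [hWdef, hE, Matrix.single_mul_single_same, one_mul]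
  have hWF : W * F = 0 := by rw [hF, mul_sub, mul_one, hWE, sub_self]
  have hFW : F * W = 0 := by rw [hF, sub_mul, one_mul, hEW, sub_self]
  have hX0E : X₀ * E = X₀ := by rw [hX0def, hE, Matrix.single_mul_single_same, mul_one]
  have hEX0 : E * X₀ = 0 := by rw [hX0def, hE, Matrix.single_mul_single_of_ne (h := hiz)]
  have hX0F : X₀ * F = 0 := by rw [hF, mul_sub, mul_one, hX0E, sub_self]
  have hFX0 : F * X₀ = X₀ := by rw [hF, sub_mul, one_mul, hEX0, sub_zero]
  have hX0X0 : X₀ * X₀ = 0 := by rw [hX0def, Matrix.single_mul_single_of_ne (h := hiz)]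
  have hX0Y : X₀ * Y = f₁ := by
    rw [hX0def, hYdef, Matrix.single_mul_single_same, one_mul, ← hf1def]
  have hEf1 : E * f₁ = 0 := by rw [hE, hf1def, Matrix.single_mul_single_of_ne (h := hiz)]
  have hf1E : f₁ * E = 0 := by rw [hE, hf1def, Matrix.single_mul_single_of_ne (h := hi)]
  have hFf1 : F * f₁ = f₁ := by rw [hF, sub_mul, one_mul, hEf1, sub_zero]
  have hf1F : f₁ * F = f₁ := by rw [hF, mul_sub, mul_one, hf1E, sub_zero]
  have hf1f1 : f₁ * f₁ = f₁ := by rw [hf1def, Matrix.single_mul_single_same, one_mul]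
  have hX0f1 : X₀ * f₁ = 0 := by rw [hX0def, hf1def, Matrix.single_mul_single_of_ne (h := hiz)]
  have hf1X0 : f₁ * X₀ = X₀ := by
    rw [hf1def, hX0def, Matrix.single_mul_single_same, one_mul]
  have hEg : E * g = 0 := by rw [hgdef, mul_sub, hEFm, hEf1, sub_self]
  have hgg : g * g = g := by
    rw [hgdef, sub_mul, mul_sub, mul_sub, hFF, hFf1, hf1F, hf1f1, sub_self, sub_zero]
  have hX0g : X₀ * g = 0 := by rw [hgdef, mul_sub, hX0F, hX0f1, sub_self]
  have hgX0 : g * X₀ = 0 := by rw [hgdef, sub_mul, hFX0, hf1X0, sub_self]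
  have hWX0 : W * X₀ = 0 := by rw [hWdef, hX0def, Matrix.single_mul_single_of_ne (h := hiz)]
  have hXX0 : X * X₀ = 0 := by rw [hXdef, hX0def, Matrix.single_mul_single_of_ne (h := hiz)]
  have hX0W : X₀ * W = X := by
    rw [hX0def, hWdef, Matrix.single_mul_single_same, one_mul, ← hXdef]
  have hX0X : X₀ * X = 0 := by rw [hX0def, hXdef, Matrix.single_mul_single_of_ne (h := hiz)]
  -- normalize the corner hypotheses
  rw [bm.l_r] at hEF1 hEF2
  -- pair (E, F)
  have rEF := hΔ E F hEFm hFEm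
  have L1a : bm.r (bm.l E (Δ F)) E = 0 := by
    have h := congrArg (fun m => bm.l E (bm.r m E)) rEF
    simp only [bm.l_r, ← bm.mul_l, ← bm.r_mul, bm.l_add, bm.add_l, bm.r_add, bm.add_r,
      bm.l_zero, bm.zero_l, bm.r_zero, bm.zero_r, hEE, hEFm, hFEm, hFF,
      add_zero, zero_add] at h
    exact htf _ h
  have L1b : bm.r (bm.l E (Δ F)) F = 0 := by
    have h := congrArg (fun m => bm.l E (bm.r m F)) rEF
    simp only [bm.l_r, ← bm.mul_l, ← bm.r_mul, bm.l_add, bm.add_l, bm.r_add, bm.add_r,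
      bm.l_zero, bm.zero_l, bm.r_zero, bm.zero_r, hEE, hEFm, hFEm, hFF, hEF1,
      add_zero, zero_add] at h
    exact h
  have L1d : bm.r (bm.l F (Δ E)) F = 0 := by
    have h := congrArg (fun m => bm.l F (bm.r m F)) rEF
    simp only [bm.l_r, ← bm.mul_l, ← bm.r_mul, bm.l_add, bm.add_l, bm.r_add, bm.add_r,
      bm.l_zero, bm.zero_l, bm.r_zero, bm.zero_r, hEE, hEFm, hFEm, hFF,
      add_zero, zero_add] at h
    exact htf _ h
  -- pair (X₀, X₀) : E Δ(X₀) f₁ = 0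
  have L4 : bm.r (bm.l E (Δ X₀)) f₁ = 0 := by
    have h := congrArg (fun m => bm.l E (bm.r m Y)) (hΔ X₀ X₀ hX0X0 hX0X0)
    simp only [bm.l_r, ← bm.mul_l, ← bm.r_mul, bm.l_add, bm.add_l, bm.r_add, bm.add_r,
      bm.l_zero, bm.zero_l, bm.r_zero, bm.zero_r, hX0Y, hEX0,
      add_zero, zero_add] at h
    exact htf _ h
  -- pair (X₀, g) : E Δ(X₀) g = 0
  have L3g : bm.r (bm.l E (Δ X₀)) g = 0 := by
    have h := congrArg (fun m => bm.l E (bm.r m g)) (hΔ X₀ g hX0g hgX0)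
    simp only [bm.l_r, ← bm.mul_l, ← bm.r_mul, bm.l_add, bm.add_l, bm.r_add, bm.add_r,
      bm.l_zero, bm.zero_l, bm.r_zero, bm.zero_r, hgg, hEX0, hX0g, hEg,
      add_zero, zero_add] at h
    exact h
  have L3 : bm.r (bm.l E (Δ X₀)) F = 0 := by
    have hsplit : F = f₁ + g := by rw [hgdef]; abel
    rw [hsplit, bm.add_r, L4, L3g, add_zero]
  -- pair (W, F) : E Δ(W) F = 0
  have kW_F : bm.r (bm.l W (Δ F)) F = 0 := by
    rw [← hWE, bm.mul_l, ← bm.l_r, L1b, bm.l_zero]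
  have L2 : bm.r (bm.l E (Δ W)) F = 0 := by
    have h := congrArg (fun m => bm.l E (bm.r m F)) (hΔ W F hWF hFW)
    simp only [bm.l_r, ← bm.mul_l, ← bm.r_mul, bm.l_add, bm.add_l, bm.r_add, bm.add_r,
      bm.l_zero, bm.zero_l, bm.r_zero, bm.zero_r, hFF, hEW, hWF, hEFm, kW_F,
      add_zero, zero_add] at h
    exact h
  -- main pair (W + X, X₀ - F) : E Δ(X) F = 0
  have kW_X0 : bm.r (bm.l W (Δ X₀)) F = 0 := by
    rw [← hWE, bm.mul_l, ← bm.l_r, L3, bm.l_zero]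
  have hUV : (W + X) * (X₀ - F) = 0 := by
    rw [add_mul, mul_sub, mul_sub, hWX0, hWF, hXX0, hXF]; simp
  have hVU : (X₀ - F) * (W + X) = 0 := by
    rw [sub_mul, mul_add, mul_add, hX0W, hX0X, hFW, hFX]; abel
  have EDF : bm.r (bm.l E (Δ X)) F = 0 := by
    have rel := hΔ (W + X) (X₀ - F) hUV hVU
    simp only [hadd, dsub] at rel
    have h := congrArg (fun m => bm.l E (bm.r m F)) rel
    simp only [bm.l_r, ← bm.mul_l, ← bm.r_mul, bm.l_add, bm.add_l, bm.r_add, bm.add_r,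
      bm.l_sub, bm.sub_l, bm.r_sub, bm.sub_r, bm.l_neg, bm.neg_l, bm.r_neg, bm.neg_r,
      bm.l_zero, bm.zero_l, bm.r_zero, bm.zero_r,
      add_mul, mul_add, sub_mul, mul_sub,
      hEE, hEFm, hFEm, hFF, hEW, hEX, hWX0, hWF, hXX0, hXF, hX0F, hEX0,
      L2, kW_X0, kW_F,
      add_zero, zero_add, sub_zero, zero_sub, sub_self, neg_zero, neg_neg,
      add_sub_cancel_right] at h
    -- h should be : -(bm.r (bm.l E (Δ X)) F) = 0 or similar
    rw [neg_eq_zero] at h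
    exact h
  -- kill lemmas
  have killF_to_X : ∀ t : M, bm.r t F = 0 → bm.r t X = 0 := by
    intro t ht; rw [← hFX, bm.r_mul, ht, bm.zero_r]
  have killX_atom : ∀ (t : M) (Q : Matrix (Fin n) (Fin n) R),
      bm.r (bm.l E t) Q = 0 → bm.r (bm.l X t) Q = 0 := by
    intro t Q ht; rw [← hXE, bm.mul_l, ← bm.l_r, ht, bm.l_zero]
  have kEX1 : bm.r (bm.l E (Δ E)) X = 0 := killF_to_X _ hEF1
  have kFX1 : bm.r (bm.l E (Δ F)) X = 0 := killF_to_X _ L1b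
  have kXX1 : bm.r (bm.l E (Δ X)) X = 0 := killF_to_X _ EDF
  have kXE2 : bm.r (bm.l X (Δ E)) F = 0 := killX_atom _ _ hEF1
  have kXF2 : bm.r (bm.l X (Δ F)) F = 0 := killX_atom _ _ L1b
  have kXX2 : bm.r (bm.l X (Δ X)) F = 0 := killX_atom _ _ EDF
  -- pair (E - X, F + X)
  have p1 : (E - X) * (F + X) = 0 := by
    rw [sub_mul, mul_add, mul_add, hEFm, hEX, hXF, hXX]; simp
  have p2 : (F + X) * (E - X) = 0 := by
    rw [add_mul, mul_sub, mul_sub, hFEm, hFX, hXE, hXX]; abel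
  have rel3 := hΔ (E - X) (F + X) p1 p2
  simp only [hadd, dsub] at rel3
  have EDE : bm.r (bm.l E (Δ X)) E = 0 := by
    have h := congrArg (fun m => bm.l E (bm.r m E)) rel3
    simp only [bm.l_r, ← bm.mul_l, ← bm.r_mul, bm.l_add, bm.add_l, bm.r_add, bm.add_r,
      bm.l_sub, bm.sub_l, bm.r_sub, bm.sub_r, bm.l_neg, bm.neg_l, bm.r_neg, bm.neg_r,
      bm.l_zero, bm.zero_l, bm.r_zero, bm.zero_r,
      add_mul, mul_add, sub_mul, mul_sub,
      hEE, hEFm, hFEm, hFF, hEX, hXE, hXF, hFX, hXX,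
      L1a, kEX1, kFX1, kXX1,
      add_zero, zero_add, sub_zero, zero_sub, sub_self, neg_zero, neg_neg] at h
    exact htf _ h
  have FDF : bm.r (bm.l F (Δ X)) F = 0 := by
    have h := congrArg (fun m => bm.l F (bm.r m F)) rel3
    simp only [bm.l_r, ← bm.mul_l, ← bm.r_mul, bm.l_add, bm.add_l, bm.r_add, bm.add_r,
      bm.l_sub, bm.sub_l, bm.r_sub, bm.sub_r, bm.l_neg, bm.neg_l, bm.r_neg, bm.neg_r,
      bm.l_zero, bm.zero_l, bm.r_zero, bm.zero_r,
      add_mul, mul_add, sub_mul, mul_sub,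
      hEE, hEFm, hFEm, hFF, hEX, hXE, hXF, hFX, hXX,
      L1d, kXE2, kXF2, kXX2,
      add_zero, zero_add, sub_zero, zero_sub, sub_self, neg_zero, neg_neg] at h
    -- expect h : -a + -a = 0 (or -(a+a) = 0)
    rw [← neg_add, neg_eq_zero] at h
    exact htf _ h
  -- assembly
  have hsplit1 : (1 : Matrix (Fin n) (Fin n) R) = E + F := by rw [hF]; abel
  rw [bm.l_r]
  calc Δ X = bm.l 1 (bm.r (Δ X) 1) := by rw [(hunit _).2, (hunit _).1]
    _ = bm.r (bm.l (E + F) (Δ X)) (E + F) := by rw [← hsplit1, bm.l_r]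
    _ = bm.r (bm.l F (Δ X)) E := by
        simp only [bm.add_l, bm.r_add, bm.add_r, EDE, EDF, FDF, zero_add, add_zero]

theorem stmt6 (R : Type*) [Ring R] (n : ℕ) (hn : 2 ≤ n)
    (M : Type*) [AddCommGroup M] (bm : RingBimod (Matrix (Fin n) (Fin n) R) M)
    (hunit : ∀ m : M, bm.l 1 m = m ∧ bm.r m 1 = m)
    (htf : ∀ m : M, m + m = 0 → m = 0)
    (Δ : Matrix (Fin n) (Fin n) R → M)
    (hadd : ∀ A B, Δ (A + B) = Δ A + Δ B)
    (hΔ : ∀ A B, A * B = 0 → B * A = 0 →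
      bm.r (Δ A) B + bm.l A (Δ B) + bm.r (Δ B) A + bm.l B (Δ A) = 0)
    (E F : Matrix (Fin n) (Fin n) R)
    (hE : E = Matrix.single ⟨0, by omega⟩ ⟨0, by omega⟩ (1 : R))
    (hF : F = 1 - E)
    (hEF1 : bm.l E (bm.r (Δ E) F) = 0) (hEF2 : bm.l F (bm.r (Δ E) E) = 0) :
    ∀ A : Matrix (Fin n) (Fin n) R,
      Δ (F * A * E) = bm.l F (bm.r (Δ (F * A * E)) E) := by
  intro A
  have hz : (0 : ℕ) < n := by omega
  set z : Fin n := ⟨0, hz⟩ with hzdef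
  have hE' : E = Matrix.single z z (1 : R) := hE
  have dzero : Δ 0 = 0 := by
    have h := hadd 0 0
    rw [add_zero] at h
    exact add_left_cancel (h.symm.trans (add_zero _).symm)
  have key : ∀ (j : Fin n), j ≠ z → ∀ c : R,
      Δ (Matrix.single j z c) =
        bm.l F (bm.r (Δ (Matrix.single j z c)) E) :=
    fun j hj c => key_lemma R n M bm hunit htf Δ hadd hΔ E F z hE' hF hEF1 hEF2 j hj c
  have hz0 : (F * A) z z = 0 := by
    rw [hF, Matrix.sub_mul, Matrix.one_mul]
    rw [Matrix.sub_apply, hE']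
    rw [Matrix.mul_apply]
    simp [Matrix.single, Finset.sum_ite_eq]
  have hdec : F * A * E = ∑ j : Fin n, Matrix.single j z ((F * A) j z) := by
    ext p q
    rw [Matrix.sum_apply, Matrix.mul_apply]
    by_cases hq : q = z
    · subst hq
      simp [hE', Matrix.single, Finset.sum_ite_eq]
    · simp [hE', Matrix.single, hq, Ne.symm hq]
  have hsum1 : Δ (F * A * E) = ∑ j : Fin n, Δ (Matrix.single j z ((F * A) j z)) := by
    rw [hdec]
    exact map_sum (AddMonoidHom.mk' Δ hadd) _ _
  calc Δ (F * A * E) = ∑ j : Fin n, Δ (Matrix.single j z ((F * A) j z)) := hsum1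
    _ = ∑ j : Fin n, bm.l F (bm.r (Δ (Matrix.single j z ((F * A) j z))) E) := by
        refine Finset.sum_congr rfl (fun j _ => ?_)
        by_cases hj : j = z
        · subst hj
          rw [hz0, Matrix.single_zero, dzero, bm.zero_r, bm.l_zero]
        · exact key j hj _
    _ = bm.l F (bm.r (∑ j : Fin n, Δ (Matrix.single j z ((F * A) j z))) E) :=
        (map_sum (AddMonoidHom.mk' (fun m => bm.l F (bm.r m E))
          (fun m₁ m₂ => by simp only [bm.r_add, bm.l_add])) _ _).symm
    _ = bm.l F (bm.r (Δ (F * A * E)) E) := by rw [← hsum1]
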